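/- Coupling, part (b): let β > 0 and let γ be a loop supported in B_N with 𝒞_γ nonempty. Let η ~ P^γ_{B_N,β} (high-temperature model) and, independently, X₁ ~ Ψ_{1−1/cosh(2β)} (iid Bernoulli plaquette percolation). Identify η with the indicator function of (supp η)^+ on C_2(B_N)^+. Then the pointwise maximum max(η, X₁) : C_2(B_N)^+ → {0,1} has law 𝐏̂^γ_{B_N,β}, the law of the indicator n̂(p) = 1(n(p) > 0) of a random current n ~ 𝐏^γ_{B_N,β}. -/
import Mathlib


open scoped Classical

namespace LGT

/-- A site (vertex) of the lattice `ℤ^m`. -/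
abbrev Site (m : ℕ) := Fin m → ℤ

/-- The `i`-th unit vector. -/
def unitVec (m : ℕ) (i : Fin m) : Site m := fun j => if j = i then 1 else 0

/-- An oriented nearest-neighbour edge of `ℤ^m`: it joins `base` and `base + e_dir`,
oriented from `base` to `base + e_dir` when `ori = true`, and oppositely otherwise. -/
structure OEdge (m : ℕ) where
  base : Site m
  dir : Fin m
  ori : Bool
deriving DecidableEq

/-- An oriented plaquette of `ℤ^m` (valid when `dir1 < dir2`): the unit square with
corners `base, base + e_dir1, base + e_dir2, base + e_dir1 + e_dir2`, positively
oriented when `ori = true`. -/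
structure OPlaq (m : ℕ) where
  base : Site m
  dir1 : Fin m
  dir2 : Fin m
  ori : Bool
deriving DecidableEq

/-- The same edge with reversed orientation. -/
def OEdge.neg {m : ℕ} (e : OEdge m) : OEdge m := ⟨e.base, e.dir, !e.ori⟩

/-- The same plaquette with reversed orientation. -/
def OPlaq.neg {m : ℕ} (p : OPlaq m) : OPlaq m := ⟨p.base, p.dir1, p.dir2, !p.ori⟩

/-- The source vertex of an oriented edge. -/
def OEdge.src {m : ℕ} (e : OEdge m) : Site m :=
  if e.ori then e.base else e.base + unitVec m e.dir

/-- The target vertex of an oriented edge. -/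
def OEdge.tgt {m : ℕ} (e : OEdge m) : Site m :=
  if e.ori then e.base + unitVec m e.dir else e.base

/-- `x ∈ B_N = [-N,N]^m ∩ ℤ^m`. -/
def inBox (m N : ℕ) (x : Site m) : Prop := ∀ i, |x i| ≤ (N : ℤ)

/-- `C_1(B_N)`: oriented edges with both endpoints in `B_N`. -/
def C1 (m N : ℕ) : Set (OEdge m) :=
  {e | inBox m N e.base ∧ inBox m N (e.base + unitVec m e.dir)}

/-- The four corners of a plaquette. -/
def OPlaq.corners {m : ℕ} (p : OPlaq m) : List (Site m) :=
  [p.base, p.base + unitVec m p.dir1, p.base + unitVec m p.dir2,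
    p.base + unitVec m p.dir1 + unitVec m p.dir2]

/-- The four oriented boundary edges of an oriented plaquette. -/
def OPlaq.bdry {m : ℕ} (p : OPlaq m) : List (OEdge m) :=
  let l : List (OEdge m) :=
    [⟨p.base, p.dir1, true⟩, ⟨p.base + unitVec m p.dir1, p.dir2, true⟩,
     ⟨p.base + unitVec m p.dir2, p.dir1, false⟩, ⟨p.base, p.dir2, false⟩]
  if p.ori then l else l.map OEdge.neg

/-- `C_2(B_N)`: oriented plaquettes with all corners in `B_N`. -/
def C2 (m N : ℕ) : Set (OPlaq m) :=
  {p | p.dir1 < p.dir2 ∧ ∀ x ∈ p.corners, inBox m N x}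

/-- `C_2(B_N)^+`: positively oriented plaquettes of `C_2(B_N)`. -/
def C2plus (m N : ℕ) : Set (OPlaq m) := {p | p ∈ C2 m N ∧ p.ori = true}

/-- `supp ∂̂e`: the plaquettes of `C_2(B_N)` whose oriented boundary contains `e`. -/
def cob (m N : ℕ) (e : OEdge m) : Set (OPlaq m) := {p | p ∈ C2 m N ∧ e ∈ p.bdry}

/-- A loop: a finitely supported `ℤ`-valued function on oriented edges with values in
`{-1,0,1}`, odd under orientation reversal, whose boundary vanishes as a `0`-chain. -/
structure IsLoop (m : ℕ) (γ : OEdge m → ℤ) : Prop where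
  finite_supp : (Function.support γ).Finite
  vals : ∀ e, γ e = -1 ∨ γ e = 0 ∨ γ e = 1
  antisym : ∀ e, γ (OEdge.neg e) = - γ e
  bdry_zero : ∀ v : Site m,
    (∑ᶠ e : OEdge m, γ e *
      ((if OEdge.tgt e = v then 1 else 0) - (if OEdge.src e = v then (1 : ℤ) else 0))) = 0

/-- A loop supported in `B_N`. -/
def LoopIn (m N : ℕ) (γ : OEdge m → ℤ) : Prop :=
  IsLoop m γ ∧ ∀ e, γ e ≠ 0 → e ∈ C1 m N

/-- `Ω^1(B_N, ℤ₂)`: `ℤ₂`-valued one-forms on `C_1(B_N)`. -/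
def Omega1 (m N : ℕ) : Set (OEdge m → ZMod 2) :=
  {σ | (∀ e, e ∉ C1 m N → σ e = 0) ∧ ∀ e, σ (OEdge.neg e) = - σ e}

/-- The natural representation `ρ(g) = e^{iπ g} ∈ {±1}` of `ℤ₂`. -/
noncomputable def rho (g : ZMod 2) : ℝ := if g = 0 then 1 else -1

/-- The exterior derivative `dσ(p) = Σ_{e ∈ ∂p} σ(e)`. -/
def dOne {m : ℕ} (σ : OEdge m → ZMod 2) (p : OPlaq m) : ZMod 2 := (p.bdry.map σ).sum

/-- The Wilson action `S(σ) = -Σ_{p ∈ C_2(B_N)} ρ(dσ(p))`. -/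
noncomputable def action (m N : ℕ) (σ : OEdge m → ZMod 2) : ℝ :=
  - ∑ᶠ p ∈ C2 m N, rho (dOne σ p)

/-- The Wilson loop variable `W_γ(σ) = Π_{e ∈ (supp γ)^+} ρ(σ(e))`. -/
noncomputable def wilson (m : ℕ) (γ : OEdge m → ℤ) (σ : OEdge m → ZMod 2) : ℝ :=
  ∏ᶠ e ∈ {e : OEdge m | γ e ≠ 0 ∧ e.ori = true}, rho (σ e)

/-- `Z_{β,N}[γ] = Σ_{σ ∈ Ω^1(B_N,ℤ₂)} W_γ(σ) e^{-β S(σ)}`. -/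
noncomputable def Z (m N : ℕ) (β : ℝ) (γ : OEdge m → ℤ) : ℝ :=
  ∑ᶠ σ ∈ Omega1 m N, wilson m γ σ * Real.exp (- β * action m N σ)

/-- The finite-volume Gibbs expectation `E_{N,β}[f]`. -/
noncomputable def Eexp (m N : ℕ) (β : ℝ) (f : (OEdge m → ZMod 2) → ℝ) : ℝ :=
  (∑ᶠ σ ∈ Omega1 m N, f σ * Real.exp (- β * action m N σ)) /
    (∑ᶠ σ ∈ Omega1 m N, Real.exp (- β * action m N σ))

/-- `E_{N,β}[W_γ]`. -/
noncomputable def Ewilson (m N : ℕ) (β : ℝ) (γ : OEdge m → ℤ) : ℝ :=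
  Eexp m N β (wilson m γ)

/-- A current: an integer-valued `2`-form on `C_2(B_N)` that is nonnegative on
positively oriented plaquettes. -/
def IsCurrent (m N : ℕ) (n : OPlaq m → ℤ) : Prop :=
  (∀ p, p ∉ C2 m N → n p = 0) ∧ (∀ p, n (OPlaq.neg p) = - n p) ∧
    (∀ p ∈ C2plus m N, 0 ≤ n p)

/-- `𝒞_γ`: the currents with source `γ`. -/
def CurSet (m N : ℕ) (γ : OEdge m → ℤ) : Set (OPlaq m → ℤ) :=
  {n | IsCurrent m N n ∧ ∀ e ∈ C1 m N,
      ((γ e : ZMod 2) + ∑ᶠ p ∈ cob m N e, ((n p : ZMod 2))) = 0}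

/-- The weight `w_β(n) = Π_{p ∈ C_2(B_N)^+} (2β)^{n(p)}/n(p)!` of a current. -/
noncomputable def wgt (m N : ℕ) (β : ℝ) (n : OPlaq m → ℤ) : ℝ :=
  ∏ᶠ p ∈ C2plus m N, (2 * β) ^ (n p).toNat / (Nat.factorial (n p).toNat)

/-- `q ≤ n` on positively oriented plaquettes. -/
def leOn (m N : ℕ) (q n : OPlaq m → ℤ) : Prop := ∀ p ∈ C2plus m N, q p ≤ n p

/-- `𝒫_γ^{ht}`: `ℤ₂`-valued `2`-forms on `C_2(B_N)` with `δω = γ (mod 2)`. -/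
def HTset (m N : ℕ) (γ : OEdge m → ℤ) : Set (OPlaq m → ZMod 2) :=
  {ω | (∀ p, p ∉ C2 m N → ω p = 0) ∧ (∀ p, ω (OPlaq.neg p) = - ω p) ∧
    ∀ e ∈ C1 m N, (∑ᶠ p ∈ cob m N e, ω p) = (γ e : ZMod 2)}

/-- `(supp ω)^+`. -/
def suppPlus (m N : ℕ) (ω : OPlaq m → ZMod 2) : Set (OPlaq m) :=
  {p | p ∈ C2plus m N ∧ ω p ≠ 0}

/-- The high-temperature weight `(tanh 2β)^{|(supp ω)^+|}`. -/
noncomputable def htWeight (m N : ℕ) (β : ℝ) (ω : OPlaq m → ZMod 2) : ℝ :=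
  Real.tanh (2 * β) ^ (Nat.card ↥(suppPlus m N ω))

/-- The high-temperature model `P^γ_{B_N,β}`: probability mass of `ω ∈ 𝒫_γ^{ht}`. -/
noncomputable def htProb (m N : ℕ) (β : ℝ) (γ : OEdge m → ℤ) (ω : OPlaq m → ZMod 2) : ℝ :=
  htWeight m N β ω / ∑ᶠ ω' ∈ HTset m N γ, htWeight m N β ω'

/-- The random current model `𝐏^γ_{B_N,β}`: probability of an event `A ⊆ 𝒞_γ`. -/
noncomputable def rcProb (m N : ℕ) (β : ℝ) (γ : OEdge m → ℤ) (A : Set (OPlaq m → ℤ)) : ℝ :=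
  (∑' n : ↥(CurSet m N γ ∩ A), wgt m N β n) / (∑' n : ↥(CurSet m N γ), wgt m N β n)

/-- The trace `n̂` of a current: the set of positively oriented plaquettes where `n > 0`. -/
def hatCur (m N : ℕ) (n : OPlaq m → ℤ) : Set (OPlaq m) :=
  {p | p ∈ C2plus m N ∧ 0 < n p}

/-- The probability that iid Bernoulli plaquette percolation `Ψ_q` on `C_2(B_N)^+`
produces exactly the configuration (subset) `A`. -/
noncomputable def bernoulli (m N : ℕ) (q : ℝ) (A : Set (OPlaq m)) : ℝ :=
  ∏ᶠ p ∈ C2plus m N, (if p ∈ A then q else 1 - q)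

/-- `∂P ≡ γ (mod 2)`: for every edge `e ∈ C_1(B_N)` the number of plaquettes of `P`
whose boundary contains `e` or `-e` is congruent to `γ(e)` mod `2`. -/
def BdryCong (m N : ℕ) (P : Set (OPlaq m)) (γ : OEdge m → ℤ) : Prop :=
  ∀ e ∈ C1 m N,
    ((Nat.card ↥{p ∈ P | e ∈ p.bdry ∨ OEdge.neg e ∈ p.bdry} : ZMod 2)) = (γ e : ZMod 2)

/-- `𝒫_γ`: subsets of `C_2(B_N)^+` containing a subset with boundary `γ (mod 2)`. -/
def PlaqSet (m N : ℕ) (γ : OEdge m → ℤ) : Set (Set (OPlaq m)) :=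
  {P | P ⊆ C2plus m N ∧ ∃ P', P' ⊆ P ∧ BdryCong m N P' γ}

/-- `N₀(P)`: the number of `σ ∈ Ω^1(B_N,ℤ₂)` with `dσ(p) = 0` for all `p ∈ P`. -/
noncomputable def N0 (m N : ℕ) (P : Set (OPlaq m)) : ℕ :=
  Nat.card ↥{σ ∈ Omega1 m N | ∀ p ∈ P, dOne σ p = 0}

/-- The random cluster weight `N₀(P) q^{|P|} (1-q)^{|C_2(B_N)^+ ∖ P|}`. -/
noncomputable def rcmWeight (m N : ℕ) (q : ℝ) (P : Set (OPlaq m)) : ℝ :=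
  (N0 m N P : ℝ) * q ^ (Nat.card ↥P) * (1 - q) ^ (Nat.card ↥(C2plus m N \ P))

/-- The random cluster model `φ^γ_{B_N,q}`: probability mass of `P` (zero off `𝒫_γ`). -/
noncomputable def rcmProb (m N : ℕ) (q : ℝ) (γ : OEdge m → ℤ) (P : Set (OPlaq m)) : ℝ :=
  (if P ∈ PlaqSet m N γ then rcmWeight m N q P else 0) /
    ∑ᶠ P' ∈ PlaqSet m N γ, rcmWeight m N q P'

/-- `S_γ(P)`: the subsets of `P` with boundary `γ (mod 2)`. -/
def Sset (m N : ℕ) (γ : OEdge m → ℤ) (P : Set (OPlaq m)) : Set (Set (OPlaq m)) :=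
  {P' | P' ⊆ P ∧ BdryCong m N P' γ}

/-- The `ℤ₂`-valued `2`-form whose support among positively oriented plaquettes is `P'`. -/
noncomputable def formOf {m : ℕ} (P' : Set (OPlaq m)) : OPlaq m → ZMod 2 :=
  fun p => if p ∈ P' ∨ OPlaq.neg p ∈ P' then 1 else 0

/-- The vertices of the support of a loop. -/
def vertsOf (m : ℕ) (γ : OEdge m → ℤ) : Set (Site m) :=
  {x | ∃ e, γ e ≠ 0 ∧ (x = OEdge.src e ∨ x = OEdge.tgt e)}

/-- The graph (`ℓ¹`) distance between two sites of `ℤ^m`. -/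
def distL1 (m : ℕ) (x y : Site m) : ℕ := ∑ i, (x i - y i).natAbs

/-- The minimal graph distance between the supports of two loops. -/
noncomputable def suppDist (m : ℕ) (γ γ' : OEdge m → ℤ) : ℕ :=
  sInf {d | ∃ x ∈ vertsOf m γ, ∃ y ∈ vertsOf m γ', d = distL1 m x y}

/-- `area(γ) = min_{n ∈ 𝒞_γ} Σ_{p ∈ C_2(B_N)^+} n(p)`. -/
noncomputable def areaOf (m N : ℕ) (γ : OEdge m → ℤ) : ℕ :=
  sInf {k : ℕ | ∃ n ∈ CurSet m N γ, (∑ᶠ p ∈ C2plus m N, n p) = (k : ℤ)}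

/-- Translation of a loop by a lattice vector. -/
def translate (m : ℕ) (v : Site m) (γ : OEdge m → ℤ) : OEdge m → ℤ :=
  fun e => γ ⟨e.base - v, e.dir, e.ori⟩

/-- The site `a·e₀ + b·e₁` in the fixed coordinate plane spanned by the first two
coordinate directions. -/
def planeSite (m : ℕ) (h : 1 < m) (a b : ℤ) : Site m :=
  fun j => if j = (⟨0, by omega⟩ : Fin m) then a else if j = (⟨1, h⟩ : Fin m) then b else 0

/-- The axis-parallel rectangular loop `γ_{R,T}` with corners `0, R·e₀, R·e₀+T·e₁, T·e₁`
in the fixed coordinate plane spanned by the first two coordinate directions. -/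
noncomputable def rectLoop (m : ℕ) (h : 1 < m) (R T : ℕ) : OEdge m → ℤ := fun e =>
  (∑ k ∈ Finset.range R,
    ((if e = ⟨planeSite m h k 0, ⟨0, by omega⟩, true⟩ then (1 : ℤ) else 0)
      - (if e = OEdge.neg ⟨planeSite m h k 0, ⟨0, by omega⟩, true⟩ then 1 else 0)
      - (if e = ⟨planeSite m h k T, ⟨0, by omega⟩, true⟩ then 1 else 0)
      + (if e = OEdge.neg ⟨planeSite m h k T, ⟨0, by omega⟩, true⟩ then 1 else 0)))
  + (∑ k ∈ Finset.range T,
    ((if e = ⟨planeSite m h R k, ⟨1, h⟩, true⟩ then (1 : ℤ) else 0)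
      - (if e = OEdge.neg ⟨planeSite m h R k, ⟨1, h⟩, true⟩ then 1 else 0)
      - (if e = ⟨planeSite m h 0 k, ⟨1, h⟩, true⟩ then 1 else 0)
      + (if e = OEdge.neg ⟨planeSite m h 0 k, ⟨1, h⟩, true⟩ then 1 else 0)))


section Chunk1

open scoped ENNReal

private lemma tsum_eq_toReal {α : Type*} (f : α → ℝ) (hf : ∀ a, 0 ≤ f a) :
    ∑' a, f a = (∑' a, ENNReal.ofReal (f a)).toReal := by
  by_cases h : Summable f
  · rw [← ENNReal.ofReal_tsum_of_nonneg hf h, ENNReal.toReal_ofReal (tsum_nonneg hf)]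
  · rw [tsum_eq_zero_of_not_summable h]
    have htop : ∑' a, ENNReal.ofReal (f a) = ⊤ := by
      by_contra hc
      have h2 := ENNReal.summable_toReal hc
      have : (fun a => (ENNReal.ofReal (f a)).toReal) = f := by
        funext a; exact ENNReal.toReal_ofReal (hf a)
      rw [this] at h2
      exact h h2
    simp [htop]

private lemma tsum_pi_prod (ι : Type) [hι : Fintype ι] (f : ι → ℕ → ℝ≥0∞) :
    (∑' v : ι → ℕ, ∏ i, f i (v i)) = ∏ i, ∑' k, f i k := by
  revert f
  refine Fintype.induction_empty_option ?_ ?_ ?_ ι (h_fintype := hι)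
  · intro α β hβ e ih f
    letI : Fintype α := Fintype.ofEquiv β e.symm
    rw [← (Equiv.arrowCongr e (Equiv.refl ℕ)).tsum_eq (fun v => ∏ i, f i (v i))]
    have h2 : ∀ w, (∏ i, f i (((Equiv.arrowCongr e (Equiv.refl ℕ)) w) i))
        = ∏ j, f (e j) (w j) := by
      intro w
      rw [← Equiv.prod_comp e (fun i => f i (((Equiv.arrowCongr e (Equiv.refl ℕ)) w) i))]
      exact Finset.prod_congr rfl fun j _ => by simp [Equiv.arrowCongr]
    rw [tsum_congr h2, ih (fun j k => f (e j) k), ← Equiv.prod_comp e (fun i => ∑' k, f i k)]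
  · intro f
    simp only [Finset.univ_eq_empty, Finset.prod_empty]
    exact tsum_eq_single (fun x => x.elim) (fun b hb => absurd (funext fun x => x.elim) hb)
  · intro α hα ih f
    rw [← (Equiv.piOptionEquivProd (β := fun _ => ℕ)).symm.tsum_eq
      (fun v => ∏ i, f i (v i))]
    have h2 : ∀ p : ℕ × (α → ℕ),
        (∏ i, f i (((Equiv.piOptionEquivProd (β := fun _ => ℕ)).symm p) i))
          = f none p.1 * ∏ j, f (some j) (p.2 j) := by
      intro p
      rw [Fintype.prod_option]
      simp [Equiv.piOptionEquivProd]
    rw [tsum_congr h2,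
      ENNReal.tsum_prod (f := fun (a : ℕ) (w : α → ℕ) => f none a * ∏ j, f (some j) (w j))]
    simp only [ENNReal.tsum_mul_left, ENNReal.tsum_mul_right]
    rw [Fintype.prod_option, ih (fun j k => f (some j) k)]

private lemma tsum_even (x : ℝ) (hx : 0 ≤ x) :
    ∑' k : ℕ, (if 2 ∣ k then ENNReal.ofReal (x ^ k / k.factorial) else 0)
      = ENNReal.ofReal (Real.cosh x) := by
  have hinj : Function.Injective (fun n : ℕ => 2 * n) := fun a b h => by dsimp only at h; omega
  have hsupp : Function.support
      (fun k : ℕ => if 2 ∣ k then ENNReal.ofReal (x ^ k / k.factorial) else 0)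
        ⊆ Set.range (fun n : ℕ => 2 * n) := by
    intro k hk
    by_cases h : 2 ∣ k
    · obtain ⟨j, hj⟩ := h; exact ⟨j, by dsimp only; omega⟩
    · exact absurd (if_neg h) hk
  rw [← Function.Injective.tsum_eq hinj hsupp]
  have h1 : ∀ n : ℕ, (if 2 ∣ 2 * n then ENNReal.ofReal (x ^ (2 * n) / (2 * n).factorial) else 0)
      = ENNReal.ofReal (x ^ (2 * n) / (2 * n).factorial) := fun n => if_pos ⟨n, rfl⟩
  rw [tsum_congr h1, ← ENNReal.ofReal_tsum_of_nonneg (fun n => by positivity)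
    (Real.hasSum_cosh x).summable, (Real.hasSum_cosh x).tsum_eq]

private lemma tsum_odd (x : ℝ) (hx : 0 ≤ x) :
    ∑' k : ℕ, (if ¬ 2 ∣ k then ENNReal.ofReal (x ^ k / k.factorial) else 0)
      = ENNReal.ofReal (Real.sinh x) := by
  have hinj : Function.Injective (fun n : ℕ => 2 * n + 1) := fun a b h => by dsimp only at h; omega
  have hsupp : Function.support
      (fun k : ℕ => if ¬ 2 ∣ k then ENNReal.ofReal (x ^ k / k.factorial) else 0)
        ⊆ Set.range (fun n : ℕ => 2 * n + 1) := by
    intro k hk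
    by_cases h : 2 ∣ k
    · exact absurd (if_neg (not_not_intro h)) hk
    · exact ⟨k / 2, by dsimp only; omega⟩
  rw [← Function.Injective.tsum_eq hinj hsupp]
  have h1 : ∀ n : ℕ,
      (if ¬ 2 ∣ 2 * n + 1 then ENNReal.ofReal (x ^ (2 * n + 1) / (2 * n + 1).factorial) else 0)
      = ENNReal.ofReal (x ^ (2 * n + 1) / (2 * n + 1).factorial) := fun n => if_pos (by omega)
  rw [tsum_congr h1, ← ENNReal.ofReal_tsum_of_nonneg (fun n => by positivity)
    (Real.hasSum_sinh x).summable, (Real.hasSum_sinh x).tsum_eq]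

private lemma tsum_even_pos (x : ℝ) (hx : 0 ≤ x) :
    ∑' k : ℕ, (if 2 ∣ k ∧ 0 < k then ENNReal.ofReal (x ^ k / k.factorial) else 0)
      = ENNReal.ofReal (Real.cosh x - 1) := by
  have hinj : Function.Injective (fun n : ℕ => 2 * (n + 1)) := fun a b h => by dsimp only at h; omega
  have hsupp : Function.support
      (fun k : ℕ => if 2 ∣ k ∧ 0 < k then ENNReal.ofReal (x ^ k / k.factorial) else 0)
        ⊆ Set.range (fun n : ℕ => 2 * (n + 1)) := by
    intro k hk
    by_cases h : 2 ∣ k ∧ 0 < k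
    · obtain ⟨j, hj⟩ := h.1
      have hj1 : 1 ≤ j := by omega
      exact ⟨j - 1, by dsimp only; omega⟩
    · simp only [Function.mem_support, if_neg h, ne_eq, not_true_eq_false] at hk
  rw [← Function.Injective.tsum_eq hinj hsupp]
  have h1 : ∀ n : ℕ,
      (if 2 ∣ 2 * (n + 1) ∧ 0 < 2 * (n + 1) then
        ENNReal.ofReal (x ^ (2 * (n + 1)) / (2 * (n + 1)).factorial) else 0)
      = ENNReal.ofReal (x ^ (2 * (n + 1)) / (2 * (n + 1)).factorial) :=
    fun n => if_pos (by omega)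
  have hsm : Summable (fun n : ℕ => x ^ (2 * n) / (2 * n).factorial) :=
    (Real.hasSum_cosh x).summable
  have hsm2 : Summable (fun n : ℕ => x ^ (2 * (n + 1)) / (2 * (n + 1)).factorial) :=
    (summable_nat_add_iff 1).2 hsm
  rw [tsum_congr h1, ← ENNReal.ofReal_tsum_of_nonneg (fun n => by positivity) hsm2]
  congr 1
  have h0 := Summable.tsum_eq_zero_add hsm
  rw [(Real.hasSum_cosh x).tsum_eq] at h0
  simp only [mul_zero, pow_zero, Nat.factorial_zero, Nat.cast_one] at h0
  linarith

private lemma tsum_zero_only (x : ℝ) (hx : 0 ≤ x) :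
    ∑' k : ℕ, (if 2 ∣ k ∧ ¬ 0 < k then ENNReal.ofReal (x ^ k / k.factorial) else 0) = 1 := by
  rw [tsum_eq_single 0 (fun b hb => if_neg (by omega))]
  simp

private lemma sum_powerset_prod_ite {α : Type*} [DecidableEq α] (S : Finset α) (f g : α → ℝ) :
    ∑ B ∈ S.powerset, ∏ p ∈ S, (if p ∈ B then f p else g p) = ∏ p ∈ S, (f p + g p) := by
  rw [Finset.prod_add]
  refine Finset.sum_congr rfl fun B hB => ?_
  rw [Finset.mem_powerset] at hB
  calc ∏ p ∈ S, (if p ∈ B then f p else g p)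
      = ∏ p ∈ B ∪ S \ B, (if p ∈ B then f p else g p) := by
        rw [Finset.union_sdiff_of_subset hB]
    _ = (∏ p ∈ B, if p ∈ B then f p else g p) * ∏ p ∈ S \ B, if p ∈ B then f p else g p :=
        Finset.prod_union Finset.disjoint_sdiff
    _ = (∏ p ∈ B, f p) * ∏ p ∈ S \ B, g p := by
        congr 1
        · exact Finset.prod_congr rfl fun p hp => if_pos hp
        · exact Finset.prod_congr rfl fun p hp => if_neg (Finset.mem_sdiff.mp hp).2


end Chunk1


section Aux

open scoped ENNReal

private lemma inBox_finite (m N : ℕ) : {x : Site m | inBox m N x}.Finite := by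
  have hsub : {x : Site m | inBox m N x} ⊆ Set.univ.pi (fun _ : Fin m => Set.Icc (-(N:ℤ)) N) := by
    intro x hx i _
    exact abs_le.mp (hx i)
  exact (Set.Finite.pi fun _ => Set.finite_Icc _ _).subset hsub

private lemma C2_finite (m N : ℕ) : (C2 m N).Finite := by
  have himg : ((fun p : OPlaq m => (p.base, p.dir1, p.dir2, p.ori)) '' (C2 m N)).Finite := by
    apply Set.Finite.subset
      (Set.Finite.prod (inBox_finite m N) (Set.finite_univ (α := Fin m × Fin m × Bool)))
    rintro _ ⟨p, hp, rfl⟩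
    exact ⟨hp.2 p.base (by simp [OPlaq.corners]), trivial⟩
  exact Set.Finite.of_finite_image himg (fun p _ q _ h => by
    cases p; cases q; simp_all)

private lemma C2plus_finite (m N : ℕ) : (C2plus m N).Finite :=
  (C2_finite m N).subset fun _ hp => hp.1

private lemma HTset_finite (m N : ℕ) (γ : OEdge m → ℤ) : (HTset m N γ).Finite := by
  haveI := (C2_finite m N).to_subtype
  have hinj : Set.InjOn (fun ω : OPlaq m → ZMod 2 => (C2 m N).restrict ω) (HTset m N γ) := by
    intro ω1 h1 ω2 h2 h
    funext p
    by_cases hp : p ∈ C2 m N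
    · exact congrFun h ⟨p, hp⟩
    · rw [h1.1 p hp, h2.1 p hp]
  exact Set.Finite.of_finite_image (Set.toFinite _) hinj

private lemma plaq_neg_neg {m : ℕ} (p : OPlaq m) : p.neg.neg = p := by
  cases p; simp [OPlaq.neg]

private lemma neg_mem_C2 {m N : ℕ} {p : OPlaq m} : OPlaq.neg p ∈ C2 m N ↔ p ∈ C2 m N :=
  Iff.rfl

/-- The positively oriented plaquettes of the box, as a `Finset`. -/
private noncomputable def Sfin (m N : ℕ) : Finset (OPlaq m) := (C2plus_finite m N).toFinset

private lemma mem_Sfin {m N : ℕ} {p : OPlaq m} : p ∈ Sfin m N ↔ p ∈ C2plus m N :=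
  Set.Finite.mem_toFinset _

private lemma coe_Sfin (m N : ℕ) : (↑(Sfin m N) : Set (OPlaq m)) = C2plus m N :=
  Set.Finite.coe_toFinset _

private lemma notMem_Sfin_neg {m N : ℕ} {p : OPlaq m} (h : p ∈ Sfin m N) :
    OPlaq.neg p ∉ Sfin m N := by
  rw [mem_Sfin] at h ⊢
  intro h2
  have h1 := h.2
  have h3 := h2.2
  simp only [OPlaq.neg] at h3
  rw [h1] at h3
  simp at h3

private lemma mem_C2_cases {m N : ℕ} {p : OPlaq m} (hp : p ∈ C2 m N) :
    p ∈ C2plus m N ∨ OPlaq.neg p ∈ C2plus m N := by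
  by_cases ho : p.ori = true
  · exact Or.inl ⟨hp, ho⟩
  · refine Or.inr ⟨neg_mem_C2.mpr hp, ?_⟩
    simp only [OPlaq.neg]
    simp only [Bool.not_eq_true] at ho
    rw [ho]
    rfl

/-- The map from tuples of nonneg. integers indexed by positive plaquettes to currents. -/
private noncomputable def PhiMap (m N : ℕ) (v : {p // p ∈ Sfin m N} → ℕ) : OPlaq m → ℤ :=
  fun p => if h : p ∈ Sfin m N then (v ⟨p, h⟩ : ℤ)
    else if h' : OPlaq.neg p ∈ Sfin m N then -(v ⟨OPlaq.neg p, h'⟩ : ℤ) else 0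

private lemma Phi_pos {m N : ℕ} (v : {p // p ∈ Sfin m N} → ℕ) {p : OPlaq m}
    (h : p ∈ Sfin m N) : PhiMap m N v p = (v ⟨p, h⟩ : ℤ) := dif_pos h

private lemma Phi_negmem {m N : ℕ} (v : {p // p ∈ Sfin m N} → ℕ) {p : OPlaq m}
    (h : OPlaq.neg p ∈ Sfin m N) : PhiMap m N v p = -(v ⟨OPlaq.neg p, h⟩ : ℤ) := by
  have hn : p ∉ Sfin m N := by
    intro hc
    exact notMem_Sfin_neg hc h
  rw [PhiMap]
  rw [dif_neg hn, dif_pos h]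

private lemma Phi_zero {m N : ℕ} (v : {p // p ∈ Sfin m N} → ℕ) {p : OPlaq m}
    (h1 : p ∉ Sfin m N) (h2 : OPlaq.neg p ∉ Sfin m N) : PhiMap m N v p = 0 := by
  rw [PhiMap, dif_neg h1, dif_neg h2]

private lemma notMem_C2_of_not_Sfin {m N : ℕ} {p : OPlaq m}
    (h1 : p ∉ Sfin m N) (h2 : OPlaq.neg p ∉ Sfin m N) : p ∉ C2 m N := by
  intro hc
  rcases mem_C2_cases hc with hl | hr
  · exact h1 (mem_Sfin.mpr hl)
  · exact h2 (mem_Sfin.mpr hr)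

private lemma Phi_isCurrent {m N : ℕ} (v : {p // p ∈ Sfin m N} → ℕ) :
    IsCurrent m N (PhiMap m N v) := by
  refine ⟨?_, ?_, ?_⟩
  · intro p hp
    have h1 : p ∉ Sfin m N := fun hc => hp (mem_Sfin.mp hc).1
    have h2 : OPlaq.neg p ∉ Sfin m N := fun hc => hp (neg_mem_C2.mp (mem_Sfin.mp hc).1)
    exact Phi_zero v h1 h2
  · intro p
    by_cases h : p ∈ Sfin m N
    · have h2 : OPlaq.neg (OPlaq.neg p) ∈ Sfin m N := by rw [plaq_neg_neg]; exact h
      rw [Phi_negmem v h2, Phi_pos v h]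
      have heq : (⟨OPlaq.neg (OPlaq.neg p), h2⟩ : {q // q ∈ Sfin m N}) = ⟨p, h⟩ :=
        Subtype.ext (plaq_neg_neg p)
      rw [heq]
    · by_cases h' : OPlaq.neg p ∈ Sfin m N
      · rw [Phi_pos v h', Phi_negmem v h', neg_neg]
      · have h'' : OPlaq.neg (OPlaq.neg p) ∉ Sfin m N := by rw [plaq_neg_neg]; exact h
        rw [Phi_zero v h' h'', Phi_zero v h h', neg_zero]
  · intro p hp
    rw [Phi_pos v (mem_Sfin.mpr hp)]
    exact Int.natCast_nonneg _

private lemma Phi_cast {m N : ℕ} (v : {p // p ∈ Sfin m N} → ℕ) (ω : OPlaq m → ZMod 2)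
    (h0 : ∀ p, p ∉ C2 m N → ω p = 0) (hanti : ∀ p, ω (OPlaq.neg p) = -ω p)
    (hall : ∀ p : {q // q ∈ Sfin m N}, ((v p : ZMod 2)) = ω ↑p) :
    ∀ p, ((PhiMap m N v p : ZMod 2)) = ω p := by
  intro p
  by_cases h : p ∈ Sfin m N
  · rw [Phi_pos v h]
    push_cast
    exact hall ⟨p, h⟩
  · by_cases h' : OPlaq.neg p ∈ Sfin m N
    · rw [Phi_negmem v h']
      push_cast
      rw [hall ⟨OPlaq.neg p, h'⟩, hanti p]
      ring
    · rw [Phi_zero v h h', h0 p (notMem_C2_of_not_Sfin h h')]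
      push_cast
      rfl

private lemma Phi_inj (m N : ℕ) : Function.Injective (PhiMap m N) := by
  intro v w h
  funext p
  have hp := congrFun h ↑p
  rw [Phi_pos v p.2, Phi_pos w p.2] at hp
  rw [Subtype.coe_eta] at hp
  exact Int.natCast_inj.mp hp

private lemma zmod2_add_self (z : ZMod 2) : z + z = 0 := by revert z; decide

private lemma zmod2_cases (z : ZMod 2) : z = 0 ∨ z = 1 := by revert z; decide

private lemma Phi_mem_CurSet {m N : ℕ} {γ : OEdge m → ℤ} (v : {p // p ∈ Sfin m N} → ℕ)
    {ω : OPlaq m → ZMod 2} (hω : ω ∈ HTset m N γ)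
    (hall : ∀ p : {q // q ∈ Sfin m N}, ((v p : ZMod 2)) = ω ↑p) :
    PhiMap m N v ∈ CurSet m N γ := by
  refine ⟨Phi_isCurrent v, fun e he => ?_⟩
  have hcast := Phi_cast v ω hω.1 hω.2.1 hall
  have h1 : ∑ᶠ p ∈ cob m N e, ((PhiMap m N v p : ZMod 2)) = ∑ᶠ p ∈ cob m N e, ω p :=
    finsum_mem_congr rfl fun p _ => hcast p
  rw [h1, hω.2.2 e he]
  exact zmod2_add_self _

private lemma wgt_eq (m N : ℕ) (β : ℝ) (n : OPlaq m → ℤ) :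
    wgt m N β n = ∏ p ∈ Sfin m N, (2 * β) ^ (n p).toNat / (Nat.factorial (n p).toNat) := by
  rw [wgt, ← coe_Sfin m N, finprod_mem_coe_finset]

private lemma wgt_nonneg {m N : ℕ} {β : ℝ} (hβ : 0 ≤ β) (n : OPlaq m → ℤ) :
    0 ≤ wgt m N β n := by
  rw [wgt_eq]
  exact Finset.prod_nonneg fun p _ => by positivity

private lemma htWeight_eq (m N : ℕ) (β : ℝ) (ω : OPlaq m → ZMod 2) :
    htWeight m N β ω = ∏ p ∈ Sfin m N, (if ω p ≠ 0 then Real.tanh (2 * β) else 1) := by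
  have hsupp : suppPlus m N ω = ↑((Sfin m N).filter fun p => ω p ≠ 0) := by
    ext p
    simp only [suppPlus, Finset.coe_filter, Set.mem_setOf_eq, mem_Sfin]
  rw [htWeight, hsupp, Nat.card_coe_set_eq, Set.ncard_coe_finset]
  rw [Finset.prod_ite, Finset.prod_const, Finset.prod_const, one_pow, mul_one]

end Aux



section Chunk3

open scoped ENNReal

private lemma zmod2_neg (z : ZMod 2) : -z = z := by revert z; decide

private lemma tsum_piece (m N : ℕ) (β : ℝ) (hβ : 0 ≤ β) (γ : OEdge m → ℤ)
    (ω : OPlaq m → ZMod 2) (hω : ω ∈ HTset m N γ) (C : OPlaq m → ℕ → Prop) :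
    ∑' n : ↥{n : OPlaq m → ℤ | n ∈ CurSet m N γ ∧ (∀ p, ((n p : ZMod 2)) = ω p) ∧
        ∀ p : {q // q ∈ Sfin m N}, C ↑p (n ↑p).toNat},
      ENNReal.ofReal (wgt m N β ↑n)
    = ∏ p : {q // q ∈ Sfin m N},
        ∑' k : ℕ, (if ((k : ZMod 2) = ω ↑p ∧ C ↑p k) then
          ENNReal.ofReal ((2 * β) ^ k / (Nat.factorial k)) else 0) := by
  classical
  set pieceS : Set (OPlaq m → ℤ) := {n | n ∈ CurSet m N γ ∧ (∀ p, ((n p : ZMod 2)) = ω p) ∧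
      ∀ p : {q // q ∈ Sfin m N}, C ↑p (n ↑p).toNat} with hpieceS
  set W : (OPlaq m → ℤ) → ℝ≥0∞ := fun n => ENNReal.ofReal (wgt m N β n) with hW
  have hrecon : ∀ n ∈ pieceS, n = PhiMap m N (fun p => (n ↑p).toNat) := by
    intro n hn
    have hcur := hn.1.1
    funext p
    by_cases h : p ∈ Sfin m N
    · rw [Phi_pos _ h]
      exact (Int.toNat_of_nonneg (hcur.2.2 p (mem_Sfin.mp h))).symm
    · by_cases h' : OPlaq.neg p ∈ Sfin m N
      · rw [Phi_negmem _ h', Int.toNat_of_nonneg (hcur.2.2 _ (mem_Sfin.mp h'))]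
        have h2 := hcur.2.1 (OPlaq.neg p)
        rw [plaq_neg_neg] at h2
        exact h2
      · rw [Phi_zero _ h h']
        exact hcur.1 p (notMem_C2_of_not_Sfin h h')
  have hsupp : Function.support (pieceS.indicator W) ⊆ Set.range (PhiMap m N) := by
    intro n hn
    have hmem : n ∈ pieceS := by
      by_contra hc
      rw [Function.mem_support, Set.indicator_of_notMem hc] at hn
      exact hn rfl
    exact ⟨_, (hrecon n hmem).symm⟩
  have hptwise : ∀ v : ({q // q ∈ Sfin m N} → ℕ),
      pieceS.indicator W (PhiMap m N v)
        = ∏ p : {q // q ∈ Sfin m N}, (if ((v p : ZMod 2) = ω ↑p ∧ C ↑p (v p)) then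
            ENNReal.ofReal ((2 * β) ^ (v p) / (Nat.factorial (v p))) else 0) := by
    intro v
    by_cases hall : ∀ p : {q // q ∈ Sfin m N}, ((v p : ZMod 2) = ω ↑p ∧ C ↑p (v p))
    · have hmem : PhiMap m N v ∈ pieceS := by
        refine ⟨Phi_mem_CurSet v hω (fun p => (hall p).1),
          Phi_cast v ω hω.1 hω.2.1 (fun p => (hall p).1), ?_⟩
        intro p
        rw [Phi_pos v p.2, Subtype.coe_eta, Int.toNat_natCast]
        exact (hall p).2
      rw [Set.indicator_of_mem hmem]
      have hfacv : ∀ p : {q // q ∈ Sfin m N}, (PhiMap m N v ↑p).toNat = v p := by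
        intro p
        rw [Phi_pos v p.2, Subtype.coe_eta, Int.toNat_natCast]
      calc W (PhiMap m N v)
          = ENNReal.ofReal (∏ p ∈ Sfin m N,
              (2 * β) ^ ((PhiMap m N v p).toNat) / (Nat.factorial (PhiMap m N v p).toNat)) := by
            show ENNReal.ofReal (wgt m N β (PhiMap m N v)) = _
            rw [wgt_eq]
        _ = ∏ p ∈ Sfin m N, ENNReal.ofReal
              ((2 * β) ^ ((PhiMap m N v p).toNat) / (Nat.factorial (PhiMap m N v p).toNat)) :=
            ENNReal.ofReal_prod_of_nonneg (fun p _ => by positivity)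
        _ = ∏ p : {q // q ∈ Sfin m N}, ENNReal.ofReal
              ((2 * β) ^ ((PhiMap m N v ↑p).toNat) / (Nat.factorial (PhiMap m N v ↑p).toNat)) :=
            (Finset.prod_coe_sort _ _).symm
        _ = ∏ p : {q // q ∈ Sfin m N},
              (if ((v p : ZMod 2) = ω ↑p ∧ C ↑p (v p)) then
                ENNReal.ofReal ((2 * β) ^ (v p) / (Nat.factorial (v p))) else 0) := by
            refine Finset.prod_congr rfl fun p _ => ?_
            rw [hfacv p, if_pos (hall p)]
    · obtain ⟨p0, hp0⟩ := not_forall.mp hall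
      have hnot : PhiMap m N v ∉ pieceS := by
        intro hc
        apply hp0
        constructor
        · have h2 := hc.2.1 ↑p0
          rw [Phi_pos v p0.2, Subtype.coe_eta] at h2
          exact_mod_cast h2
        · have h2 := hc.2.2 p0
          rw [Phi_pos v p0.2, Subtype.coe_eta, Int.toNat_natCast] at h2
          exact h2
      rw [Set.indicator_of_notMem hnot]
      have hz : (if ((v p0 : ZMod 2) = ω ↑p0 ∧ C ↑p0 (v p0)) then
          ENNReal.ofReal ((2 * β) ^ (v p0) / (Nat.factorial (v p0))) else 0) = 0 := if_neg hp0
      exact (Finset.prod_eq_zero (Finset.mem_univ p0) hz).symm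
  calc ∑' n : ↥pieceS, ENNReal.ofReal (wgt m N β ↑n)
      = ∑' n, pieceS.indicator W n := tsum_subtype pieceS W
    _ = ∑' v : ({q // q ∈ Sfin m N} → ℕ), pieceS.indicator W (PhiMap m N v) :=
        (Function.Injective.tsum_eq (Phi_inj m N) hsupp).symm
    _ = ∑' v : ({q // q ∈ Sfin m N} → ℕ), ∏ p : {q // q ∈ Sfin m N},
          (if ((v p : ZMod 2) = ω ↑p ∧ C ↑p (v p)) then
            ENNReal.ofReal ((2 * β) ^ (v p) / (Nat.factorial (v p))) else 0) :=
        tsum_congr hptwise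
    _ = ∏ p : {q // q ∈ Sfin m N}, ∑' k : ℕ, (if ((k : ZMod 2) = ω ↑p ∧ C ↑p k) then
          ENNReal.ofReal ((2 * β) ^ k / (Nat.factorial k)) else 0) :=
        tsum_pi_prod _ (fun (p : {q // q ∈ Sfin m N}) (k : ℕ) =>
          if ((k : ZMod 2) = ω ↑p ∧ C ↑p k) then
            ENNReal.ofReal ((2 * β) ^ k / (Nat.factorial k)) else 0)

private lemma ite_inst {α : Sort*} {P Q : Prop} (h1 : Decidable P) (h2 : Decidable Q)
    (hPQ : P ↔ Q) {a b : α} : @ite α P h1 a b = @ite α Q h2 a b := by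
  by_cases hp : P
  · rw [if_pos hp, if_pos (hPQ.mp hp)]
  · rw [if_neg hp, if_neg (fun hq => hp (hPQ.mpr hq))]

private lemma tsum_factor (x : ℝ) (hx : 0 ≤ x) (z : ZMod 2) (Q : Prop) [Decidable Q] :
    ∑' k : ℕ, (if ((k : ZMod 2) = z ∧ (0 < k ↔ Q)) then
        ENNReal.ofReal (x ^ k / (Nat.factorial k)) else 0)
    = if z = 0 then (if Q then ENNReal.ofReal (Real.cosh x - 1) else 1)
      else (if Q then ENNReal.ofReal (Real.sinh x) else 0) := by
  have hz2 : ∀ k : ℕ, ((k : ZMod 2) = 0 ↔ 2 ∣ k) := fun k => ZMod.natCast_eq_zero_iff k 2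
  have hz1 : ∀ k : ℕ, ((k : ZMod 2) = 1 ↔ ¬ 2 ∣ k) := by
    intro k
    rcases zmod2_cases (k : ZMod 2) with h | h
    · rw [h]
      simp only [(hz2 k).mp h]
      constructor
      · intro h1; exact absurd h1.symm (by decide)
      · intro h1; exact absurd trivial (by simpa using h1)
    · rw [h]
      simp only [iff_true_intro rfl, true_iff]
      intro hd
      have := (hz2 k).mpr hd
      rw [h] at this
      exact absurd this (by decide)
  rcases zmod2_cases z with rfl | rfl
  · by_cases hQ : Q
    · rw [if_pos rfl, if_pos hQ, ← tsum_even_pos x hx]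
      refine tsum_congr fun k => ?_
      refine if_congr ?_ rfl rfl
      rw [hz2 k]
      constructor
      · rintro ⟨h1, h2⟩; exact ⟨h1, h2.mpr hQ⟩
      · rintro ⟨h1, h2⟩; exact ⟨h1, iff_of_true h2 hQ⟩
    · rw [if_pos rfl, if_neg hQ, ← tsum_zero_only x hx]
      refine tsum_congr fun k => ?_
      refine if_congr ?_ rfl rfl
      rw [hz2 k]
      constructor
      · rintro ⟨h1, h2⟩; exact ⟨h1, fun hc => hQ (h2.mp hc)⟩
      · rintro ⟨h1, h2⟩; exact ⟨h1, iff_of_false h2 hQ⟩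
  · rw [if_neg (by decide)]
    by_cases hQ : Q
    · rw [if_pos hQ, ← tsum_odd x hx]
      refine tsum_congr fun k => ?_
      refine if_congr ?_ rfl rfl
      rw [hz1 k]
      constructor
      · rintro ⟨h1, _⟩; exact h1
      · intro h1
        refine ⟨h1, iff_of_true ?_ hQ⟩
        rcases Nat.eq_zero_or_pos k with rfl | hk
        · exact absurd ⟨0, rfl⟩ h1
        · exact hk
    · rw [if_neg hQ]
      have hzero : ∀ k : ℕ, (if ((k : ZMod 2) = 1 ∧ (0 < k ↔ Q)) then
          ENNReal.ofReal (x ^ k / (Nat.factorial k)) else 0) = 0 := by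
        intro k
        refine if_neg ?_
        rintro ⟨h1, h2⟩
        rw [hz1 k] at h1
        rcases Nat.eq_zero_or_pos k with rfl | hk
        · exact h1 ⟨0, rfl⟩
        · exact hQ (h2.mp hk)
      rw [tsum_congr hzero, tsum_zero]

private lemma tsum_factorD (x : ℝ) (hx : 0 ≤ x) (z : ZMod 2) :
    ∑' k : ℕ, (if ((k : ZMod 2) = z ∧ True) then
        ENNReal.ofReal (x ^ k / (Nat.factorial k)) else 0)
    = if z = 0 then ENNReal.ofReal (Real.cosh x) else ENNReal.ofReal (Real.sinh x) := by
  have hz2 : ∀ k : ℕ, ((k : ZMod 2) = 0 ↔ 2 ∣ k) := fun k => ZMod.natCast_eq_zero_iff k 2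
  rcases zmod2_cases z with rfl | rfl
  · rw [if_pos rfl, ← tsum_even x hx]
    refine tsum_congr fun k => ?_
    refine if_congr ?_ rfl rfl
    rw [hz2 k, and_true]
  · rw [if_neg (by decide), ← tsum_odd x hx]
    refine tsum_congr fun k => ?_
    refine if_congr ?_ rfl rfl
    rw [and_true]
    constructor
    · intro h1 hd
      have := (hz2 k).mpr hd
      rw [h1] at this
      exact absurd this (by decide)
    · intro h1
      rcases zmod2_cases (k : ZMod 2) with h | h
      · exact absurd ((hz2 k).mp h) h1
      · exact h

private lemma tsum_decompose (m N : ℕ) (β : ℝ) (γ : OEdge m → ℤ) (D : (OPlaq m → ℤ) → Prop) :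
    ∑' n : ↥(CurSet m N γ ∩ {n | D n}), ENNReal.ofReal (wgt m N β ↑n)
    = ∑ ω ∈ (HTset_finite m N γ).toFinset,
        ∑' n : ↥{n : OPlaq m → ℤ | n ∈ CurSet m N γ ∧ (∀ p, ((n p : ZMod 2)) = ω p) ∧ D n},
          ENNReal.ofReal (wgt m N β ↑n) := by
  classical
  set W : (OPlaq m → ℤ) → ℝ≥0∞ := fun n => ENNReal.ofReal (wgt m N β n) with hW
  have hpt : ∀ n : OPlaq m → ℤ,
      (CurSet m N γ ∩ {n | D n}).indicator W n
      = ∑ ω ∈ (HTset_finite m N γ).toFinset,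
          ({n : OPlaq m → ℤ | n ∈ CurSet m N γ ∧ (∀ p, ((n p : ZMod 2)) = ω p) ∧ D n}).indicator
            W n := by
    intro n
    by_cases hn : n ∈ CurSet m N γ ∩ {n | D n}
    · rw [Set.indicator_of_mem hn]
      have hωn : (fun p => ((n p : ZMod 2))) ∈ HTset m N γ := by
        refine ⟨fun p hp => ?_, fun p => ?_, fun e he => ?_⟩
        · show ((n p : ZMod 2)) = 0
          rw [hn.1.1.1 p hp]
          exact Int.cast_zero
        · show ((n (OPlaq.neg p) : ZMod 2)) = -((n p : ZMod 2))
          rw [hn.1.1.2.1 p]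
          push_cast
          ring
        · show (∑ᶠ p ∈ cob m N e, ((n p : ZMod 2))) = ((γ e : ℤ) : ZMod 2)
          have h2 := hn.1.2 e he
          have h3 := eq_neg_of_add_eq_zero_right h2
          rw [h3, zmod2_neg]
      rw [Finset.sum_eq_single (fun p => ((n p : ZMod 2)))]
      · have hm : n ∈ {n' : OPlaq m → ℤ | n' ∈ CurSet m N γ ∧
            (∀ p, ((n' p : ZMod 2)) = ((n p : ZMod 2))) ∧ D n'} := ⟨hn.1, fun p => rfl, hn.2⟩
        exact (Set.indicator_of_mem hm W).symm
      · intro ω _ hne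
        rw [Set.indicator_of_notMem]
        intro hc
        exact hne (funext fun p => (hc.2.1 p).symm)
      · intro hc
        exact absurd ((Set.Finite.mem_toFinset _).mpr hωn) hc
    · rw [Set.indicator_of_notMem hn]
      symm
      refine Finset.sum_eq_zero fun ω _ => ?_
      rw [Set.indicator_of_notMem]
      intro hc
      exact hn ⟨hc.1, hc.2.2⟩
  calc ∑' n : ↥(CurSet m N γ ∩ {n | D n}), ENNReal.ofReal (wgt m N β ↑n)
      = ∑' n, (CurSet m N γ ∩ {n | D n}).indicator W n := tsum_subtype _ W
    _ = ∑' n, ∑ ω ∈ (HTset_finite m N γ).toFinset,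
          ({n : OPlaq m → ℤ | n ∈ CurSet m N γ ∧ (∀ p, ((n p : ZMod 2)) = ω p) ∧ D n}).indicator
            W n := tsum_congr hpt
    _ = ∑ ω ∈ (HTset_finite m N γ).toFinset, ∑' n,
          ({n : OPlaq m → ℤ | n ∈ CurSet m N γ ∧ (∀ p, ((n p : ZMod 2)) = ω p) ∧ D n}).indicator
            W n := Summable.tsum_finsetSum (fun _ _ => ENNReal.summable)
    _ = _ := Finset.sum_congr rfl fun ω _ => (tsum_subtype _ W).symm

end Chunk3



section Chunk5

open scoped ENNReal

private lemma num_eq (m N : ℕ) (β : ℝ) (hβ : 0 ≤ β) (γ : OEdge m → ℤ)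
    (ξ : Set (OPlaq m)) (hξ : ξ ⊆ C2plus m N) :
    (∑' n : ↥(CurSet m N γ ∩ {n | hatCur m N n = ξ}), wgt m N β ↑n)
    = ∑ ω ∈ (HTset_finite m N γ).toFinset, ∏ p ∈ Sfin m N,
        (if ω p = 0 then (if p ∈ ξ then Real.cosh (2 * β) - 1 else 1)
         else (if p ∈ ξ then Real.sinh (2 * β) else 0)) := by
  classical
  have hx : (0:ℝ) ≤ 2 * β := by linarith
  have hE : (∑' n : ↥(CurSet m N γ ∩ {n | hatCur m N n = ξ}), ENNReal.ofReal (wgt m N β ↑n))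
      = ∑ ω ∈ (HTset_finite m N γ).toFinset, ∏ p ∈ Sfin m N,
          ENNReal.ofReal (if ω p = 0 then (if p ∈ ξ then Real.cosh (2 * β) - 1 else 1)
            else (if p ∈ ξ then Real.sinh (2 * β) else 0)) := by
    rw [tsum_decompose m N β γ (fun n => hatCur m N n = ξ)]
    refine Finset.sum_congr rfl fun ω hω => ?_
    have hω' : ω ∈ HTset m N γ := (Set.Finite.mem_toFinset _).mp hω
    have hseteq : {n : OPlaq m → ℤ | n ∈ CurSet m N γ ∧ (∀ p, ((n p : ZMod 2)) = ω p) ∧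
          hatCur m N n = ξ}
        = {n : OPlaq m → ℤ | n ∈ CurSet m N γ ∧ (∀ p, ((n p : ZMod 2)) = ω p) ∧
          ∀ p : {q // q ∈ Sfin m N}, (0 < (n ↑p).toNat ↔ ↑p ∈ ξ)} := by
      ext n
      simp only [Set.mem_setOf_eq]
      refine and_congr_right fun h1 => and_congr_right fun _ => ?_
      constructor
      · intro h3 p
        have hp : ↑p ∈ C2plus m N := mem_Sfin.mp p.2
        constructor
        · intro hpos
          have hmem : (↑p : OPlaq m) ∈ hatCur m N n := ⟨hp, by omega⟩
          rw [h3] at hmem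
          exact hmem
        · intro hpξ
          rw [← h3] at hpξ
          have h4 := hpξ.2
          omega
      · intro h3
        ext p
        constructor
        · rintro ⟨hp, hpos⟩
          have h4 : (0 < (n p).toNat ↔ p ∈ ξ) := h3 ⟨p, mem_Sfin.mpr hp⟩
          exact h4.1 (by omega)
        · intro hp
          have hpC := hξ hp
          refine ⟨hpC, ?_⟩
          have h4 : (0 < (n p).toNat ↔ p ∈ ξ) := h3 ⟨p, mem_Sfin.mpr hpC⟩
          have h5 := h4.2 hp
          omega
    calc (∑' n : ↥{n : OPlaq m → ℤ | n ∈ CurSet m N γ ∧ (∀ p, ((n p : ZMod 2)) = ω p) ∧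
            hatCur m N n = ξ}, ENNReal.ofReal (wgt m N β ↑n))
        = (∑' n : ↥{n : OPlaq m → ℤ | n ∈ CurSet m N γ ∧ (∀ p, ((n p : ZMod 2)) = ω p) ∧
            ∀ p : {q // q ∈ Sfin m N}, (0 < (n ↑p).toNat ↔ ↑p ∈ ξ)},
              ENNReal.ofReal (wgt m N β ↑n)) := by rw [hseteq]
      _ = ∏ p ∈ Sfin m N, ENNReal.ofReal (if ω p = 0 then
            (if p ∈ ξ then Real.cosh (2 * β) - 1 else 1)
            else (if p ∈ ξ then Real.sinh (2 * β) else 0)) := by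
          refine Eq.trans (tsum_piece m N β hβ γ ω hω' (fun p k => (0 < k ↔ p ∈ ξ))) ?_
          rw [← Finset.prod_coe_sort (Sfin m N)]
          refine Finset.prod_congr rfl fun p _ => ?_
          refine Eq.trans (tsum_congr fun k => ite_inst _ _ Iff.rfl)
            (Eq.trans (tsum_factor (2 * β) hx (ω ↑p) ((↑p : OPlaq m) ∈ ξ)) ?_)
          by_cases h1 : ω ↑p = 0 <;> by_cases h2 : (↑p : OPlaq m) ∈ ξ <;>
            simp [h1, h2]
  have h1 : (0:ℝ) ≤ Real.cosh (2 * β) - 1 := by linarith [Real.one_le_cosh (2 * β)]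
  have h2 : (0:ℝ) ≤ Real.sinh (2 * β) := Real.sinh_nonneg_iff.mpr hx
  calc (∑' n : ↥(CurSet m N γ ∩ {n | hatCur m N n = ξ}), wgt m N β ↑n)
      = (∑' n : ↥(CurSet m N γ ∩ {n | hatCur m N n = ξ}),
          ENNReal.ofReal (wgt m N β ↑n)).toReal :=
        tsum_eq_toReal _ (fun n => wgt_nonneg hβ _)
    _ = (∑ ω ∈ (HTset_finite m N γ).toFinset, ∏ p ∈ Sfin m N,
          ENNReal.ofReal (if ω p = 0 then (if p ∈ ξ then Real.cosh (2 * β) - 1 else 1)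
            else (if p ∈ ξ then Real.sinh (2 * β) else 0))).toReal := by rw [hE]
    _ = ∑ ω ∈ (HTset_finite m N γ).toFinset, ∏ p ∈ Sfin m N,
          (if ω p = 0 then (if p ∈ ξ then Real.cosh (2 * β) - 1 else 1)
           else (if p ∈ ξ then Real.sinh (2 * β) else 0)) := by
        rw [ENNReal.toReal_sum (fun ω _ => ENNReal.prod_ne_top fun p _ => ENNReal.ofReal_ne_top)]
        refine Finset.sum_congr rfl fun ω _ => ?_
        rw [ENNReal.toReal_prod]
        refine Finset.prod_congr rfl fun p _ => ENNReal.toReal_ofReal ?_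
        by_cases hz : ω p = 0 <;> by_cases hp : p ∈ ξ <;> simp [hz, hp, h1, h2]

private lemma den_eq (m N : ℕ) (β : ℝ) (hβ : 0 ≤ β) (γ : OEdge m → ℤ) :
    (∑' n : ↥(CurSet m N γ), wgt m N β ↑n)
    = ∑ ω ∈ (HTset_finite m N γ).toFinset, ∏ p ∈ Sfin m N,
        (if ω p = 0 then Real.cosh (2 * β) else Real.sinh (2 * β)) := by
  classical
  have hx : (0:ℝ) ≤ 2 * β := by linarith
  have hE : (∑' n : ↥(CurSet m N γ ∩ {n | True}), ENNReal.ofReal (wgt m N β ↑n))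
      = ∑ ω ∈ (HTset_finite m N γ).toFinset, ∏ p ∈ Sfin m N,
          ENNReal.ofReal (if ω p = 0 then Real.cosh (2 * β) else Real.sinh (2 * β)) := by
    rw [tsum_decompose m N β γ (fun _ => True)]
    refine Finset.sum_congr rfl fun ω hω => ?_
    have hω' : ω ∈ HTset m N γ := (Set.Finite.mem_toFinset _).mp hω
    have hseteq : {n : OPlaq m → ℤ | n ∈ CurSet m N γ ∧ (∀ p, ((n p : ZMod 2)) = ω p) ∧ True}
        = {n : OPlaq m → ℤ | n ∈ CurSet m N γ ∧ (∀ p, ((n p : ZMod 2)) = ω p) ∧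
            ∀ _ : {q // q ∈ Sfin m N}, True} := by
      ext n; simp
    calc (∑' n : ↥{n : OPlaq m → ℤ | n ∈ CurSet m N γ ∧ (∀ p, ((n p : ZMod 2)) = ω p) ∧ True},
            ENNReal.ofReal (wgt m N β ↑n))
        = (∑' n : ↥{n : OPlaq m → ℤ | n ∈ CurSet m N γ ∧ (∀ p, ((n p : ZMod 2)) = ω p) ∧
            ∀ _ : {q // q ∈ Sfin m N}, True}, ENNReal.ofReal (wgt m N β ↑n)) := by rw [hseteq]
      _ = ∏ p ∈ Sfin m N, ENNReal.ofReal
            (if ω p = 0 then Real.cosh (2 * β) else Real.sinh (2 * β)) := by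
          refine Eq.trans (tsum_piece m N β hβ γ ω hω' (fun _ _ => True)) ?_
          rw [← Finset.prod_coe_sort (Sfin m N)]
          refine Finset.prod_congr rfl fun p _ => ?_
          refine Eq.trans (tsum_congr fun k => ite_inst _ _ Iff.rfl)
            (Eq.trans (tsum_factorD (2 * β) hx (ω ↑p)) ?_)
          by_cases h1 : ω ↑p = 0 <;> simp [h1]
  have h2 : (0:ℝ) ≤ Real.sinh (2 * β) := Real.sinh_nonneg_iff.mpr hx
  have hss : CurSet m N γ = CurSet m N γ ∩ {n | True} := by simp
  calc (∑' n : ↥(CurSet m N γ), wgt m N β ↑n)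
      = (∑' n : ↥(CurSet m N γ ∩ {n | True}), wgt m N β ↑n) := by rw [← hss]
    _ = (∑' n : ↥(CurSet m N γ ∩ {n | True}), ENNReal.ofReal (wgt m N β ↑n)).toReal :=
        tsum_eq_toReal _ (fun n => wgt_nonneg hβ _)
    _ = (∑ ω ∈ (HTset_finite m N γ).toFinset, ∏ p ∈ Sfin m N,
          ENNReal.ofReal (if ω p = 0 then Real.cosh (2 * β) else Real.sinh (2 * β))).toReal := by
        rw [hE]
    _ = ∑ ω ∈ (HTset_finite m N γ).toFinset, ∏ p ∈ Sfin m N,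
          (if ω p = 0 then Real.cosh (2 * β) else Real.sinh (2 * β)) := by
        rw [ENNReal.toReal_sum (fun ω _ => ENNReal.prod_ne_top fun p _ => ENNReal.ofReal_ne_top)]
        refine Finset.sum_congr rfl fun ω _ => ?_
        rw [ENNReal.toReal_prod]
        refine Finset.prod_congr rfl fun p _ => ENNReal.toReal_ofReal ?_
        by_cases hz : ω p = 0 <;> simp [hz, h2, (Real.cosh_pos (2 * β)).le]

end Chunk5


/-- **Coupling, part (b)**: `max(η, X₁)` with `η ~ P^γ` and `X₁ ~ Ψ_{1-1/cosh 2β}`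
independent has the law `𝐏̂^γ` of the trace of a random current. -/
theorem coupling_b (m N : ℕ) (hm : 3 ≤ m) (hN : 1 ≤ N) (β : ℝ) (hβ : 0 < β)
    (γ : OEdge m → ℤ) (hγ : LoopIn m N γ) (hne : (CurSet m N γ).Nonempty) :
    ∀ ξ : Set (OPlaq m), ξ ⊆ C2plus m N →
      (∑ᶠ ω ∈ HTset m N γ, ∑ᶠ A ∈ {A : Set (OPlaq m) | A ⊆ C2plus m N},
          htProb m N β γ ω * bernoulli m N (1 - 1 / Real.cosh (2 * β)) A *
            (if suppPlus m N ω ∪ A = ξ then 1 else 0))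
        = rcProb m N β γ {n | hatCur m N n = ξ} := by
  intro ξ hξ
  classical
  have hx : (0:ℝ) ≤ 2 * β := by linarith
  have hc0 : (0:ℝ) < Real.cosh (2 * β) := Real.cosh_pos _
  have hcne : Real.cosh (2 * β) ≠ 0 := ne_of_gt hc0
  have htanh : Real.cosh (2 * β) * Real.tanh (2 * β) = Real.sinh (2 * β) := by
    rw [Real.tanh_eq_sinh_div_cosh]
    field_simp
  have hHTcoe : HTset m N γ = ↑((HTset_finite m N γ).toFinset) :=
    (Set.Finite.coe_toFinset _).symm
  have hAcoe : {A : Set (OPlaq m) | A ⊆ C2plus m N}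
      = ↑(((C2plus_finite m N).finite_subsets).toFinset) := (Set.Finite.coe_toFinset _).symm
  have hZeq : (∑ᶠ ω' ∈ HTset m N γ, htWeight m N β ω')
      = ∑ ω' ∈ (HTset_finite m N γ).toFinset, htWeight m N β ω' :=
    finsum_mem_eq_finite_toFinset_sum _ (HTset_finite m N γ)
  -- inner sum over percolation configurations, for a fixed high-temperature configuration
  have hsplit : ∀ ω ∈ (HTset_finite m N γ).toFinset,
      (∑ᶠ A ∈ {A : Set (OPlaq m) | A ⊆ C2plus m N},
        htProb m N β γ ω * bernoulli m N (1 - 1 / Real.cosh (2 * β)) A *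
          (if suppPlus m N ω ∪ A = ξ then 1 else 0))
      = htProb m N β γ ω * ∏ p ∈ Sfin m N,
          ((if p ∈ ξ then (1 - 1 / Real.cosh (2 * β)) else 0)
            + (if p ∈ suppPlus m N ω then
                (if p ∈ ξ then 1 - (1 - 1 / Real.cosh (2 * β)) else 0)
               else (if p ∈ ξ then 0 else 1 - (1 - 1 / Real.cosh (2 * β))))) := by
    intro ω _
    rw [finsum_mem_eq_finite_toFinset_sum _ ((C2plus_finite m N).finite_subsets)]
    have hre : ∑ A ∈ ((C2plus_finite m N).finite_subsets).toFinset,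
        htProb m N β γ ω * bernoulli m N (1 - 1 / Real.cosh (2 * β)) A *
          (if suppPlus m N ω ∪ A = ξ then 1 else 0)
        = ∑ B ∈ (Sfin m N).powerset,
            htProb m N β γ ω * bernoulli m N (1 - 1 / Real.cosh (2 * β)) ↑B *
              (if suppPlus m N ω ∪ ↑B = ξ then 1 else 0) := by
      refine Finset.sum_bij'
        (fun A hA => (Set.Finite.subset (C2plus_finite m N)
          ((Set.Finite.mem_toFinset ((C2plus_finite m N).finite_subsets)).mp hA)).toFinset)
        (fun B _ => (↑B : Set (OPlaq m))) ?_ ?_ ?_ ?_ ?_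
      · intro A hA
        refine Finset.mem_powerset.mpr fun p hp => ?_
        exact mem_Sfin.mpr (((Set.Finite.mem_toFinset _).mp hA)
          ((Set.Finite.mem_toFinset _).mp hp))
      · intro B hB
        refine (Set.Finite.mem_toFinset _).mpr fun p hp => ?_
        exact mem_Sfin.mp (Finset.mem_powerset.mp hB hp)
      · intro A hA
        exact Set.Finite.coe_toFinset _
      · intro B hB
        ext p
        simp [Set.Finite.mem_toFinset]
      · intro A hA
        rw [Set.Finite.coe_toFinset]
    rw [hre]
    have hterm : ∀ B ∈ (Sfin m N).powerset,
        htProb m N β γ ω * bernoulli m N (1 - 1 / Real.cosh (2 * β)) ↑B *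
          (if suppPlus m N ω ∪ ↑B = ξ then 1 else 0)
        = htProb m N β γ ω * ∏ p ∈ Sfin m N,
            (if p ∈ B then (if p ∈ ξ then (1 - 1 / Real.cosh (2 * β)) else 0)
             else (if p ∈ suppPlus m N ω then
                (if p ∈ ξ then 1 - (1 - 1 / Real.cosh (2 * β)) else 0)
               else (if p ∈ ξ then 0 else 1 - (1 - 1 / Real.cosh (2 * β))))) := by
      intro B hB
      have hBsub := Finset.mem_powerset.mp hB
      have hbern : bernoulli m N (1 - 1 / Real.cosh (2 * β)) ↑B
          = ∏ p ∈ Sfin m N, (if p ∈ B then (1 - 1 / Real.cosh (2 * β))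
              else 1 - (1 - 1 / Real.cosh (2 * β))) := by
        rw [bernoulli, ← coe_Sfin m N, finprod_mem_coe_finset]
        refine Finset.prod_congr rfl fun p _ => ?_
        by_cases h : p ∈ B <;> simp [h]
      have hiff : (suppPlus m N ω ∪ ↑B = ξ)
          ↔ ∀ p ∈ Sfin m N, ((p ∈ suppPlus m N ω ∨ p ∈ B) ↔ p ∈ ξ) := by
        constructor
        · intro h p _
          rw [← h]
          simp [Set.mem_union]
        · intro h
          ext p
          constructor
          · intro hp
            rcases hp with hp | hp
            · exact (h p (mem_Sfin.mpr hp.1)).mp (Or.inl hp)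
            · have hpB : p ∈ B := hp
              exact (h p (hBsub hpB)).mp (Or.inr hpB)
          · intro hp
            have hpS : p ∈ Sfin m N := mem_Sfin.mpr (hξ hp)
            rcases (h p hpS).mpr hp with h1 | h2
            · exact Or.inl h1
            · exact Or.inr h2
      have hind : (if suppPlus m N ω ∪ ↑B = ξ then (1:ℝ) else 0)
          = ∏ p ∈ Sfin m N, (if ((p ∈ suppPlus m N ω ∨ p ∈ B) ↔ p ∈ ξ) then 1 else 0) := by
        rw [Finset.prod_boole]
        by_cases h : suppPlus m N ω ∪ ↑B = ξ
        · rw [if_pos h, if_pos (hiff.mp h)]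
        · rw [if_neg h, if_neg fun hc => h (hiff.mpr hc)]
      rw [hbern, hind, mul_assoc, ← Finset.prod_mul_distrib]
      congr 1
      refine Finset.prod_congr rfl fun p _ => ?_
      by_cases h1 : p ∈ B <;> by_cases h2 : p ∈ suppPlus m N ω <;> by_cases h3 : p ∈ ξ <;>
        simp [h1, h2, h3]
    rw [Finset.sum_congr rfl hterm, ← Finset.mul_sum]
    congr 1
    exact sum_powerset_prod_ite (Sfin m N) _ _
  -- numerator and denominator factor identities
  have hsuppiff : ∀ (ω : OPlaq m → ZMod 2), ∀ p ∈ Sfin m N,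
      (p ∈ suppPlus m N ω ↔ ω p ≠ 0) := by
    intro ω p hp
    have hpC : p ∈ C2plus m N := mem_Sfin.mp hp
    simp [suppPlus, hpC]
  have hfnum : ∀ ω ∈ (HTset_finite m N γ).toFinset,
      (∏ p ∈ Sfin m N, (if ω p = 0 then (if p ∈ ξ then Real.cosh (2 * β) - 1 else 1)
          else (if p ∈ ξ then Real.sinh (2 * β) else 0)))
      = Real.cosh (2 * β) ^ (Sfin m N).card * (htWeight m N β ω * ∏ p ∈ Sfin m N,
          ((if p ∈ ξ then (1 - 1 / Real.cosh (2 * β)) else 0)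
            + (if p ∈ suppPlus m N ω then
                (if p ∈ ξ then 1 - (1 - 1 / Real.cosh (2 * β)) else 0)
               else (if p ∈ ξ then 0 else 1 - (1 - 1 / Real.cosh (2 * β)))))) := by
    intro ω _
    rw [htWeight_eq, ← Finset.prod_const, ← Finset.prod_mul_distrib,
      ← Finset.prod_mul_distrib]
    refine Finset.prod_congr rfl fun p hp => ?_
    by_cases h1 : ω p = 0
    · have hns : p ∉ suppPlus m N ω := fun hc => ((hsuppiff ω p hp).mp hc) h1
      by_cases h2 : p ∈ ξ
      · simp [h1, h2, hns]
        field_simp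
      · simp [h1, h2, hns]
        field_simp
    · have hs : p ∈ suppPlus m N ω := (hsuppiff ω p hp).mpr h1
      by_cases h2 : p ∈ ξ
      · simp [h1, h2, hs]
        exact htanh.symm
      · simp [h1, h2, hs]
  have hfden : ∀ ω ∈ (HTset_finite m N γ).toFinset,
      (∏ p ∈ Sfin m N, (if ω p = 0 then Real.cosh (2 * β) else Real.sinh (2 * β)))
      = Real.cosh (2 * β) ^ (Sfin m N).card * htWeight m N β ω := by
    intro ω _
    rw [htWeight_eq, ← Finset.prod_const, ← Finset.prod_mul_distrib]
    refine Finset.prod_congr rfl fun p hp => ?_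
    by_cases h1 : ω p = 0
    · rw [if_pos h1, if_neg (not_not_intro h1), mul_one]
    · rw [if_neg h1, if_pos h1]
      exact htanh.symm
  -- assemble
  rw [finsum_mem_eq_finite_toFinset_sum _ (HTset_finite m N γ), Finset.sum_congr rfl hsplit]
  simp only [rcProb]
  rw [num_eq m N β hβ.le γ ξ hξ, den_eq m N β hβ.le γ]
  rw [Finset.sum_congr rfl hfnum, Finset.sum_congr rfl hfden, ← Finset.mul_sum,
    ← Finset.mul_sum, mul_div_mul_left _ _ (pow_ne_zero _ hcne), Finset.sum_div]
  refine Finset.sum_congr rfl fun ω _ => ?_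
  simp only [htProb]
  rw [hZeq, div_mul_eq_mul_div]


end LGT
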